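/- For every integer n ≥ 3, p(n) = 2/n + (2/(n(n−2)))·s(n−3); that is, the probability that X wins MS(P_n) playing first equals 2/n + (2/(n(n−2)))·Σ_{i=1}^{n−3} i·p(i). -/
import Mathlib


/-- `pq n = (p n, q n)` where `p n` (resp. `q n`) is the probability that the
exploitative player X, always guessing `2` or `n-1`, wins the misère search game
`MS(P_n)` against the uniformly random player R when playing first (resp. second):
`p 0 = p 1 = 0`, `q 0 = 0`,
`q n = (1/n) * ∑_{i=1}^{n} ((i-1)·p(i-1) + (n-i)·p(n-i) + 1)/n` for `n ≥ 1`, and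
`p n = 1/n + ((n-2)/n) * q (n-2)` for `n ≥ 2`. -/
noncomputable def pq : ℕ → ℝ × ℝ
  | 0 => (0, 0)
  | 1 =>
    (0,
      (1 / ((1 : ℕ) : ℝ)) * ∑ i ∈ (Finset.Icc 1 1).attach,
        (((i.1 - 1 : ℕ) : ℝ) * (pq (i.1 - 1)).1 +
          ((1 - i.1 : ℕ) : ℝ) * (pq (1 - i.1)).1 + 1) / ((1 : ℕ) : ℝ))
  | n + 2 =>
    (1 / ((n : ℝ) + 2) + ((n : ℝ) / ((n : ℝ) + 2)) * (pq n).2,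
      (1 / ((n : ℝ) + 2)) * ∑ i ∈ (Finset.Icc 1 (n + 2)).attach,
        (((i.1 - 1 : ℕ) : ℝ) * (pq (i.1 - 1)).1 +
          ((n + 2 - i.1 : ℕ) : ℝ) * (pq (n + 2 - i.1)).1 + 1) / ((n : ℝ) + 2))
  decreasing_by
  · have hm := i.2; simp only [Finset.mem_Icc] at hm; omega
  · have hm := i.2; simp only [Finset.mem_Icc] at hm; omega
  · omega
  · have hm := i.2; simp only [Finset.mem_Icc] at hm; omega
  · have hm := i.2; simp only [Finset.mem_Icc] at hm; omega

/-- X's winning probability in `MS(P_n)` playing first. -/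
noncomputable def p (n : ℕ) : ℝ := (pq n).1

/-- X's winning probability in `MS(P_n)` playing second. -/
noncomputable def q (n : ℕ) : ℝ := (pq n).2

/-- `s n = ∑_{i=1}^{n} i * p i`. -/
noncomputable def s (n : ℕ) : ℝ := ∑ i ∈ Finset.Icc 1 n, (i : ℝ) * p i

lemma sum1 (k : ℕ) (hk : 1 ≤ k) :
    ∑ i ∈ Finset.Icc 1 k, (((i - 1 : ℕ) : ℝ) * p (i - 1)) = s (k - 1) := by
  induction k with
  | zero => omega
  | succ k ih =>
    rcases Nat.eq_or_lt_of_le hk with h | h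
    · simp [← h, s]
    · have hk1 : 1 ≤ k := by omega
      rw [Finset.sum_Icc_succ_top hk, ih hk1]
      simp only [Nat.add_sub_cancel]
      have h := Finset.sum_Icc_succ_top (a := 1) (b := k - 1) (by omega)
        (fun i => (i : ℝ) * p i)
      rw [show k - 1 + 1 = k from by omega] at h
      show _ = s k
      unfold s
      rw [h]

lemma reflect (k : ℕ) (g : ℕ → ℝ) :
    ∑ i ∈ Finset.Icc 1 k, g (k - i) = ∑ i ∈ Finset.Icc 1 k, g (i - 1) := by
  apply Finset.sum_nbij' (fun i => k + 1 - i) (fun i => k + 1 - i) <;>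
    simp only [Finset.mem_Icc] <;> intro a ha
  · omega
  · omega
  · omega
  · omega
  · congr 1; omega

lemma q_eq (k : ℕ) (hk : 1 ≤ k) :
    q k = 1 / (k : ℝ) + 2 * s (k - 1) / (k : ℝ) ^ 2 := by
  have key : ∀ m : ℕ, 1 ≤ m →
      ∑ i ∈ Finset.Icc 1 m,
        ((((i - 1 : ℕ) : ℝ) * p (i - 1) + ((m - i : ℕ) : ℝ) * p (m - i) + 1)) =
      2 * s (m - 1) + (m : ℝ) := by
    intro m hm
    rw [Finset.sum_add_distrib, Finset.sum_add_distrib, sum1 m hm,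
      reflect m (fun j => ((j : ℕ) : ℝ) * p j), sum1 m hm]
    simp [Nat.card_Icc, hm]
    ring
  rcases k with _ | _ | k
  · omega
  · show (pq 1).2 = _
    rw [pq]
    rw [Finset.sum_attach (Finset.Icc 1 1)
      (fun i => (((i - 1 : ℕ) : ℝ) * (pq (i - 1)).1 +
        ((1 - i : ℕ) : ℝ) * (pq (1 - i)).1 + 1) / ((1 : ℕ) : ℝ))]
    norm_num [s]
  · show (pq (k + 2)).2 = _
    rw [pq]
    simp only
    rw [Finset.sum_attach (Finset.Icc 1 (k + 2))
      (fun i => (((i - 1 : ℕ) : ℝ) * (pq (i - 1)).1 +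
        ((k + 2 - i : ℕ) : ℝ) * (pq (k + 2 - i)).1 + 1) / ((k : ℝ) + 2))]
    rw [← Finset.sum_div]
    have := key (k + 2) (by omega)
    simp only [p] at this
    rw [this]
    have hk2 : ((k : ℝ) + 2) ≠ 0 := by positivity
    push_cast
    field_simp
    ring

/-- For every `n ≥ 3`, `p n = 2/n + (2/(n(n-2))) * s (n-3)`. -/
theorem p_eq_two_div_add (n : ℕ) (hn : 3 ≤ n) :
    p n = 2 / (n : ℝ) + (2 / ((n : ℝ) * ((n : ℝ) - 2))) * s (n - 3) := by
  obtain ⟨m, rfl⟩ : ∃ m, n = m + 3 := ⟨n - 3, by omega⟩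
  have hp : p (m + 3) = 1 / ((m : ℝ) + 3) + (((m : ℝ) + 1) / ((m : ℝ) + 3)) * q (m + 1) := by
    show (pq (m + 1 + 2)).1 = _
    rw [pq]
    push_cast
    ring_nf
    rfl
  rw [hp, q_eq (m + 1) (by omega)]
  simp only [Nat.add_sub_cancel]
  have h1 : ((m : ℝ) + 3) ≠ 0 := by positivity
  have h2 : ((m : ℝ) + 1) ≠ 0 := by positivity
  push_cast
  have : ((m : ℝ) + 3) - 2 = (m : ℝ) + 1 := by ring
  rw [this]
  field_simp
  ring
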